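/- arXiv:1509.06156 — 2 statements merged into one kernel-verified Lean document; each statement's English description precedes it below -/
import Mathlib

section
/- For real (or complex) x, y, z, ξ, η with all factors nonzero, [(1-yη)(1-zη) - xξ]^{-α} = [(1-xξ)(1-yη)(1-zη)]^{-α} ∑_{i,j≥0} (α)_{i+j}/(i! j!) σ₁^i σ₂^j, where σ₁ = xzξη/((1-xξ)(1-yη)(1-zη)) and σ₂ = xyξη/((1-xξ)(1-yη)), provided |σ₁| + |σ₂| < 1 so the double series converges absolutely. -/
/-- Real Pochhammer symbol `(x)_k`. -/
noncomputable def pochR (x : ℝ) (k : ℕ) : ℝ := (ascPochhammer ℝ k).eval x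

open Real Filter Finset Nat

lemma pochR_zero (α : ℝ) : pochR α 0 = 1 := by simp [pochR]

lemma pochR_succ (α : ℝ) (n : ℕ) : pochR α (n + 1) = pochR α n * (α + n) := by
  simp [pochR, ascPochhammer_succ_right]

lemma summable_key (α : ℝ) {t : ℝ} (h0 : 0 ≤ t) (ht : t < 1) :
    Summable (fun n : ℕ => |pochR α n| * ((n : ℝ) + 1) * t ^ n / (n ! : ℝ)) := by
  set r : ℝ := (t + 1) / 2 with hr
  have hrt : t < r := by rw [hr]; linarith
  have hr1 : r < 1 := by rw [hr]; linarith
  apply summable_of_ratio_norm_eventually_le hr1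
  have hε : (0:ℝ) < r - t := by linarith
  obtain ⟨N, hN⟩ := exists_nat_ge (((2 + |α|) * t + 2 * |α| * t) / (r - t) + 1)
  filter_upwards [eventually_ge_atTop N] with n hn
  have hnN : ((N : ℝ)) ≤ (n : ℝ) := by exact_mod_cast hn
  have hn1 : (1:ℝ) ≤ (n : ℝ) + 1 := by
    have := Nat.cast_nonneg (α := ℝ) n; linarith
  have habs : (0:ℝ) ≤ |α| := abs_nonneg _
  have key : (↑n + |α|) * ((n : ℝ) + 2) * t ≤ r * (((n : ℝ) + 1) * ((n : ℝ) + 1)) := by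
    have h1 : ((2 + |α|) * t + 2 * |α| * t) / (r - t) + 1 ≤ (n : ℝ) := le_trans hN hnN
    have h2 : (2 + |α|) * t + 2 * |α| * t ≤ (r - t) * ((n:ℝ) - 1) := by
      rw [div_add' _ _ _ (ne_of_gt hε), div_le_iff₀ hε] at h1
      nlinarith
    have hn0 : (0:ℝ) ≤ (n:ℝ) := Nat.cast_nonneg n
    nlinarith [mul_nonneg (mul_nonneg habs h0) hn0, mul_nonneg h0 hn0]
  set c : ℝ := |pochR α n| * t ^ n / (n ! : ℝ) with hc
  have hc0 : 0 ≤ c := by positivity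
  have ha : |pochR α n| * ((n : ℝ) + 1) * t ^ n / (n ! : ℝ) = c * ((n:ℝ) + 1) := by
    rw [hc]; ring
  have hfact : ((n + 1)! : ℝ) = ((n:ℝ) + 1) * (n ! : ℝ) := by
    rw [Nat.factorial_succ]; push_cast; ring
  have hb : |pochR α (n + 1)| * (((n + 1 : ℕ) : ℝ) + 1) * t ^ (n + 1) / ((n + 1)! : ℝ) =
      c * (|α + n| * ((n:ℝ) + 2) * t / ((n:ℝ) + 1)) := by
    rw [pochR_succ, abs_mul, hfact, pow_succ, hc]
    have hne : ((n:ℝ) + 1) ≠ 0 := by positivity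
    have hne2 : ((n ! : ℕ) : ℝ) ≠ 0 := by exact_mod_cast Nat.factorial_ne_zero n
    push_cast
    field_simp
    ring
  have hA0 : (0:ℝ) ≤ |pochR α (n + 1)| * (((n + 1 : ℕ) : ℝ) + 1) * t ^ (n + 1) / ((n + 1)! : ℝ) :=
    div_nonneg (mul_nonneg (mul_nonneg (abs_nonneg _) (by positivity)) (pow_nonneg h0 _))
      (Nat.cast_nonneg _)
  have hB0 : (0:ℝ) ≤ |pochR α n| * ((n : ℝ) + 1) * t ^ n / (n ! : ℝ) :=
    div_nonneg (mul_nonneg (mul_nonneg (abs_nonneg _) (by positivity)) (pow_nonneg h0 _))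
      (Nat.cast_nonneg _)
  rw [Real.norm_eq_abs, Real.norm_eq_abs, abs_of_nonneg hA0, abs_of_nonneg hB0]
  rw [hb, ha]
  have hstep : |α + (n:ℝ)| * ((n:ℝ) + 2) * t / ((n:ℝ) + 1) ≤ r * ((n:ℝ) + 1) := by
    rw [div_le_iff₀ (by positivity : (0:ℝ) < (n:ℝ) + 1)]
    have : |α + (n:ℝ)| ≤ (n:ℝ) + |α| := by
      calc |α + (n:ℝ)| ≤ |α| + |(n:ℝ)| := abs_add_le _ _
      _ = (n:ℝ) + |α| := by rw [Nat.abs_cast]; ring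
    calc |α + (n:ℝ)| * ((n:ℝ) + 2) * t ≤ ((n:ℝ) + |α|) * ((n:ℝ) + 2) * t := by
          apply mul_le_mul_of_nonneg_right _ h0
          exact mul_le_mul_of_nonneg_right this (by positivity)
      _ ≤ r * (((n:ℝ) + 1) * ((n:ℝ) + 1)) := key
      _ = r * ((n:ℝ) + 1) * ((n:ℝ) + 1) := by ring
  calc c * (|α + (n:ℝ)| * ((n:ℝ) + 2) * t / ((n:ℝ) + 1)) ≤ c * (r * ((n:ℝ) + 1)) :=
        mul_le_mul_of_nonneg_left hstep hc0
    _ = r * (c * ((n:ℝ) + 1)) := by ring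

lemma summable_abs_poch (α : ℝ) {t : ℝ} (h0 : 0 ≤ t) (ht : t < 1) :
    Summable (fun n : ℕ => |pochR α n| * t ^ n / (n ! : ℝ)) := by
  refine Summable.of_nonneg_of_le (fun n => ?_) (fun n => ?_) (summable_key α h0 ht)
  · exact div_nonneg (mul_nonneg (abs_nonneg _) (pow_nonneg h0 _)) (Nat.cast_nonneg _)
  · refine div_le_div_of_nonneg_right ?_ (Nat.cast_nonneg _)
    nlinarith [mul_nonneg (mul_nonneg (abs_nonneg (pochR α n)) (pow_nonneg h0 n)) (Nat.cast_nonneg (α := ℝ) n)]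

lemma summable_poch (α : ℝ) {t : ℝ} (ht : |t| < 1) :
    Summable (fun n : ℕ => pochR α n / (n ! : ℝ) * t ^ n) := by
  rw [← summable_abs_iff]
  refine (summable_abs_poch α (abs_nonneg t) ht).congr fun n => ?_
  rw [abs_mul, abs_div, abs_pow, Nat.abs_cast]; ring

lemma summable_deriv_bound (α : ℝ) {r : ℝ} (h0 : 0 ≤ r) (hr : r < 1) :
    Summable (fun n : ℕ => |pochR α n| / (n ! : ℝ) * ((n : ℝ) * r ^ (n - 1))) := by
  rw [← summable_nat_add_iff 1]
  refine Summable.of_nonneg_of_le (fun n => ?_) (fun n => ?_)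
    ((summable_key α h0 hr).mul_left (1 + |α|))
  · apply mul_nonneg (div_nonneg (abs_nonneg _) (Nat.cast_nonneg _))
    exact mul_nonneg (Nat.cast_nonneg _) (pow_nonneg h0 _)
  · have hfact : ((n + 1)! : ℝ) = ((n:ℝ) + 1) * (n ! : ℝ) := by
      rw [Nat.factorial_succ]; push_cast; ring
    have h1 : |pochR α (n + 1)| / ((n + 1)! : ℝ) * (((n + 1 : ℕ) : ℝ) * r ^ (n + 1 - 1)) =
        |pochR α n| * |α + n| * r ^ n / (n ! : ℝ) := by
      rw [pochR_succ, abs_mul, hfact]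
      have hne : ((n:ℝ) + 1) ≠ 0 := by positivity
      have hne2 : ((n ! : ℕ) : ℝ) ≠ 0 := by exact_mod_cast Nat.factorial_ne_zero n
      push_cast
      field_simp
    rw [h1]
    have h2 : |α + n| ≤ (1 + |α|) * ((n:ℝ) + 1) := by
      have : |α + (n:ℝ)| ≤ |α| + (n:ℝ) := by
        calc |α + (n:ℝ)| ≤ |α| + |(n:ℝ)| := abs_add_le _ _
        _ = |α| + (n:ℝ) := by rw [Nat.abs_cast]
      nlinarith [abs_nonneg α, Nat.cast_nonneg (α := ℝ) n]
    calc |pochR α n| * |α + n| * r ^ n / (n ! : ℝ)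
        ≤ |pochR α n| * ((1 + |α|) * ((n:ℝ) + 1)) * r ^ n / (n ! : ℝ) := by
          refine div_le_div_of_nonneg_right ?_ (Nat.cast_nonneg _)
          refine mul_le_mul_of_nonneg_right ?_ (pow_nonneg h0 _)
          exact mul_le_mul_of_nonneg_left h2 (abs_nonneg _)
      _ = (1 + |α|) * (|pochR α n| * ((n:ℝ) + 1) * r ^ n / (n ! : ℝ)) := by ring

lemma summable_D (α : ℝ) {t : ℝ} (ht : |t| < 1) :
    Summable (fun n : ℕ => pochR α n / (n ! : ℝ) * ((n : ℝ) * t ^ (n - 1))) := by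
  rw [← summable_abs_iff]
  refine (summable_deriv_bound α (abs_nonneg t) ht).congr fun n => ?_
  rw [abs_mul, abs_div, Nat.abs_cast, abs_mul, Nat.abs_cast, abs_pow]

lemma binomial_hasSum (α : ℝ) {s : ℝ} (hs : |s| < 1) :
    HasSum (fun n : ℕ => pochR α n / (n ! : ℝ) * s ^ n) ((1 - s) ^ (-α)) := by
  set f : ℝ → ℝ := fun t => ∑' n : ℕ, pochR α n / (n ! : ℝ) * t ^ n with hfdef
  set D : ℝ → ℝ := fun t => ∑' n : ℕ, pochR α n / (n ! : ℝ) * ((n : ℝ) * t ^ (n - 1))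
    with hDdef
  have hderiv : ∀ t ∈ Set.Ioo (-1:ℝ) 1, HasDerivAt f (D t) t := by
    intro t ht
    have h0t : |t| < 1 := abs_lt.2 ⟨ht.1, ht.2⟩
    set r : ℝ := (|t| + 1) / 2 with hrdef
    have hr0 : (0:ℝ) ≤ r := by positivity
    have hr1 : r < 1 := by rw [hrdef]; linarith
    have htr : |t| < r := by rw [hrdef]; linarith
    have hmem : t ∈ Metric.ball (0:ℝ) r := by
      simpa [Metric.mem_ball, Real.dist_eq] using htr
    have hmem0 : (0:ℝ) ∈ Metric.ball (0:ℝ) r :=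
      Metric.mem_ball_self (lt_of_le_of_lt (abs_nonneg t) htr)
    exact hasDerivAt_tsum_of_isPreconnected (summable_deriv_bound α hr0 hr1)
      Metric.isOpen_ball (convex_ball (0:ℝ) r).isPreconnected
      (fun n y _ => HasDerivAt.const_mul (pochR α n / (n ! : ℝ)) (hasDerivAt_pow n y))
      (fun n y hy => by
        have hyr : |y| ≤ r := by
          have : dist y 0 < r := hy
          rw [Real.dist_eq, sub_zero] at this
          exact this.le
        rw [Real.norm_eq_abs, abs_mul, abs_div, Nat.abs_cast, abs_mul, Nat.abs_cast, abs_pow]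
        refine mul_le_mul_of_nonneg_left ?_ (div_nonneg (abs_nonneg _) (Nat.cast_nonneg _))
        exact mul_le_mul_of_nonneg_left (pow_le_pow_left₀ (abs_nonneg y) hyr _)
          (Nat.cast_nonneg _))
      hmem0 (summable_poch α (by simpa using (lt_of_le_of_lt (abs_nonneg t) htr).trans hr1))
      hmem
  have hODE : ∀ t : ℝ, |t| < 1 → (1 - t) * D t = α * f t := by
    intro t ht
    have hsumD := summable_D α ht
    have hsumshift : Summable (fun n : ℕ => pochR α (n + 1) / (n ! : ℝ) * t ^ n) := by
      refine ((summable_nat_add_iff 1).mpr hsumD).congr fun n => ?_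
      have hfact : ((n + 1)! : ℝ) = ((n:ℝ) + 1) * (n ! : ℝ) := by
        rw [Nat.factorial_succ]; push_cast; ring
      have hne : ((n:ℝ) + 1) ≠ 0 := by positivity
      have hne2 : ((n ! : ℕ) : ℝ) ≠ 0 := by exact_mod_cast Nat.factorial_ne_zero n
      rw [hfact]
      push_cast
      field_simp
    have hsumf := summable_poch α ht
    have hsumc : Summable (fun n : ℕ => pochR α n / (n ! : ℝ) * ((n:ℝ) * t ^ n)) := by
      refine hsumD.mul_right t |>.congr fun n => ?_
      rcases n with _ | m
      · simp
      · rw [Nat.add_sub_cancel, pow_succ]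
        ring
    have hD1 : D t = ∑' n : ℕ, pochR α (n + 1) / (n ! : ℝ) * t ^ n := by
      show (∑' n : ℕ, pochR α n / (n ! : ℝ) * ((n:ℝ) * t ^ (n - 1))) =
        ∑' n : ℕ, pochR α (n + 1) / (n ! : ℝ) * t ^ n
      rw [Summable.tsum_eq_zero_add hsumD]
      simp only [Nat.cast_zero, zero_mul, mul_zero, zero_add]
      refine tsum_congr fun n => ?_
      have hfact : ((n + 1)! : ℝ) = ((n:ℝ) + 1) * (n ! : ℝ) := by
        rw [Nat.factorial_succ]; push_cast; ring
      have hne : ((n:ℝ) + 1) ≠ 0 := by positivity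
      have hne2 : ((n ! : ℕ) : ℝ) ≠ 0 := by exact_mod_cast Nat.factorial_ne_zero n
      rw [hfact]
      push_cast
      field_simp
    have hD2 : t * D t = ∑' n : ℕ, pochR α n / (n ! : ℝ) * ((n:ℝ) * t ^ n) := by
      show (t * ∑' n : ℕ, pochR α n / (n ! : ℝ) * ((n:ℝ) * t ^ (n - 1))) =
        ∑' n : ℕ, pochR α n / (n ! : ℝ) * ((n:ℝ) * t ^ n)
      rw [← tsum_mul_left]
      refine tsum_congr fun n => ?_
      rcases n with _ | m
      · simp
      · rw [Nat.add_sub_cancel, pow_succ]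
        ring
    have hsub : (1 - t) * D t = (∑' n : ℕ, pochR α (n + 1) / (n ! : ℝ) * t ^ n) -
        ∑' n : ℕ, pochR α n / (n ! : ℝ) * ((n:ℝ) * t ^ n) := by
      rw [sub_mul, one_mul, hD2, hD1]
    rw [hsub, ← Summable.tsum_sub hsumshift hsumc]
    refine Eq.trans (tsum_congr fun n => ?_) tsum_mul_left
    rw [pochR_succ]
    have hne2 : ((n ! : ℕ) : ℝ) ≠ 0 := by exact_mod_cast Nat.factorial_ne_zero n
    field_simp
    ring
  -- the function (1-t)^α * f t has zero derivative on Ioo (-1) 1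
  set g : ℝ → ℝ := fun t => (1 - t) ^ α * f t with hgdef
  have hg : ∀ t ∈ Set.Ioo (-1:ℝ) 1, HasDerivAt g 0 t := by
    intro t ht
    have h1t : (0:ℝ) < 1 - t := by linarith [ht.2]
    have hlin : HasDerivAt (fun u : ℝ => 1 - u) (-1) t := by
      simpa using (hasDerivAt_id t).const_sub 1
    have hpow : HasDerivAt (fun u : ℝ => (1 - u) ^ α) (-1 * α * (1 - t) ^ (α - 1)) t :=
      hlin.rpow_const (Or.inl (ne_of_gt h1t))
    have hmul := hpow.mul (hderiv t ht)
    have h0t : |t| < 1 := abs_lt.2 ⟨ht.1, ht.2⟩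
    have hval : -1 * α * (1 - t) ^ (α - 1) * f t + (1 - t) ^ α * D t = 0 := by
      have hsplit : (1 - t) ^ α = (1 - t) ^ (α - 1) * (1 - t) := by
        rw [← Real.rpow_add_one (ne_of_gt h1t)]
        ring_nf
      rw [hsplit]
      linear_combination (1 - t) ^ (α - 1) * hODE t h0t
    exact hmul.congr_deriv hval
  have hsIoo : s ∈ Set.Ioo (-1:ℝ) 1 := ⟨(abs_lt.1 hs).1, (abs_lt.1 hs).2⟩
  have h0Ioo : (0:ℝ) ∈ Set.Ioo (-1:ℝ) 1 := by norm_num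
  have hconst : g s = g 0 := by
    refine (convex_Ioo (-1:ℝ) 1).is_const_of_fderivWithin_eq_zero
      (fun x hx => (hg x hx).differentiableAt.differentiableWithinAt) (fun x hx => ?_)
      hsIoo h0Ioo
    rw [fderivWithin_of_isOpen isOpen_Ioo hx, (hg x hx).hasFDerivAt.fderiv]
    ext y
    simp
  have hf0 : f 0 = 1 := by
    show (∑' n : ℕ, pochR α n / (n ! : ℝ) * (0:ℝ) ^ n) = 1
    rw [tsum_eq_single 0 (fun n hn => by simp [zero_pow hn])]
    simp [pochR_zero]
  have hg0 : g 0 = 1 := by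
    show (1 - (0:ℝ)) ^ α * f 0 = 1
    simp [hf0]
  have hfs : (1 - s) ^ α * f s = 1 := by
    show g s = 1
    rw [hconst, hg0]
  have h1s : (0:ℝ) < 1 - s := by linarith [(abs_lt.1 hs).2]
  have hfs' : f s = (1 - s) ^ (-α) := by
    rw [Real.rpow_neg h1s.le]
    exact (inv_eq_of_mul_eq_one_right hfs).symm
  have h := (summable_poch α hs).hasSum
  rw [show (∑' n : ℕ, pochR α n / (n ! : ℝ) * s ^ n) = f s from rfl, hfs'] at h
  exact h

lemma sum_antidiag (c a b : ℝ) (n : ℕ) :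
    ∑ p ∈ Finset.HasAntidiagonal.antidiagonal n, c / ((p.1 ! : ℝ) * (p.2 ! : ℝ)) * a ^ p.1 * b ^ p.2
      = c / (n ! : ℝ) * (a + b) ^ n := by
  rw [Finset.Nat.sum_antidiagonal_eq_sum_range_succ_mk, add_pow, Finset.mul_sum]
  refine Finset.sum_congr rfl fun k hk => ?_
  have hkn : k ≤ n := Nat.lt_succ_iff.mp (Finset.mem_range.mp hk)
  have hch : ((n.choose k : ℕ) : ℝ) * (k ! : ℝ) * ((n - k)! : ℝ) = (n ! : ℝ) := by
    exact_mod_cast congrArg (Nat.cast : ℕ → ℝ)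
      (Nat.choose_mul_factorial_mul_factorial hkn)
  have h1 : ((k)! : ℝ) ≠ 0 := by exact_mod_cast Nat.factorial_ne_zero k
  have h2 : (((n - k))! : ℝ) ≠ 0 := by exact_mod_cast Nat.factorial_ne_zero (n - k)
  have h3 : ((n)! : ℝ) ≠ 0 := by exact_mod_cast Nat.factorial_ne_zero n
  field_simp
  linear_combination (-(c * a ^ k * b ^ (n - k))) * hch

set_option maxHeartbeats 1000000

/-- Equation (5.2): the two-variable binomial expansion
`[(1-yη)(1-zη) - xξ]^{-α} = [(1-xξ)(1-yη)(1-zη)]^{-α} ∑_{i,j} (α)_{i+j}/(i!j!) σ₁^i σ₂^j`. -/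
theorem binomial_expansion_two_var (α x y z ξ η : ℝ)
    (h1 : 1 - x * ξ ≠ 0) (h2 : 1 - y * η ≠ 0) (h3 : 1 - z * η ≠ 0)
    (h4 : (1 - y * η) * (1 - z * η) - x * ξ ≠ 0)
    (σ₁ σ₂ : ℝ)
    (hσ₁ : σ₁ = x * z * ξ * η / ((1 - x * ξ) * (1 - y * η) * (1 - z * η)))
    (hσ₂ : σ₂ = x * y * ξ * η / ((1 - x * ξ) * (1 - y * η)))
    (hconv : |σ₁| + |σ₂| < 1) :
    ((1 - y * η) * (1 - z * η) - x * ξ) ^ (-α) =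
      ((1 - x * ξ) * (1 - y * η) * (1 - z * η)) ^ (-α) *
        ∑' i : ℕ, ∑' j : ℕ,
          pochR α (i + j) / ((Nat.factorial i : ℝ) * (Nat.factorial j : ℝ)) *
            σ₁ ^ i * σ₂ ^ j := by
  have hσ₁' : σ₁ * ((1 - x * ξ) * (1 - y * η) * (1 - z * η)) = x * z * ξ * η := by
    rw [hσ₁]; exact div_mul_cancel₀ _ (mul_ne_zero (mul_ne_zero h1 h2) h3)
  have hσ₂' : σ₂ * ((1 - x * ξ) * (1 - y * η)) = x * y * ξ * η := by
    rw [hσ₂]; exact div_mul_cancel₀ _ (mul_ne_zero h1 h2)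
  have halg : (1 - y * η) * (1 - z * η) - x * ξ =
      ((1 - x * ξ) * (1 - y * η) * (1 - z * η)) * (1 - (σ₁ + σ₂)) := by
    linear_combination hσ₁' + (1 - z * η) * hσ₂'
  set P : ℝ := (1 - x * ξ) * (1 - y * η) * (1 - z * η) with hP
  have hPne : P ≠ 0 := mul_ne_zero (mul_ne_zero h1 h2) h3
  set s : ℝ := σ₁ + σ₂ with hsdef
  have habs : |s| < 1 := lt_of_le_of_lt (abs_add_le σ₁ σ₂) hconv
  have h1s : (0:ℝ) < 1 - s := by
    have := (abs_lt.1 habs).2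
    linarith
  -- the double series
  set F : ℕ × ℕ → ℝ := fun p =>
    pochR α (p.1 + p.2) / ((Nat.factorial p.1 : ℝ) * (Nat.factorial p.2 : ℝ)) *
      σ₁ ^ p.1 * σ₂ ^ p.2 with hF
  have hσnn : (0:ℝ) ≤ |σ₁| + |σ₂| := add_nonneg (abs_nonneg _) (abs_nonneg _)
  have habsF : ∀ p : ℕ × ℕ, |F p| =
      |pochR α (p.1 + p.2)| / ((p.1 ! : ℝ) * (p.2 ! : ℝ)) * |σ₁| ^ p.1 * |σ₂| ^ p.2 := by
    intro p
    rw [hF]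
    rw [abs_mul, abs_mul, abs_div, abs_mul, abs_pow, abs_pow, Nat.abs_cast, Nat.abs_cast]
  have hfiber : ∀ n : ℕ, ∑ p ∈ Finset.HasAntidiagonal.antidiagonal n, |F p| =
      |pochR α n| / (n ! : ℝ) * (|σ₁| + |σ₂|) ^ n := by
    intro n
    rw [← sum_antidiag (|pochR α n|) (|σ₁|) (|σ₂|) n]
    refine Finset.sum_congr rfl fun p hp => ?_
    rw [habsF p, (Finset.HasAntidiagonal.mem_antidiagonal.mp hp)]
  have hfiberF : ∀ n : ℕ, ∑ p ∈ Finset.HasAntidiagonal.antidiagonal n, F p =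
      pochR α n / (n ! : ℝ) * s ^ n := by
    intro n
    rw [hsdef, ← sum_antidiag (pochR α n) σ₁ σ₂ n]
    refine Finset.sum_congr rfl fun p hp => ?_
    have hFp : F p = pochR α (p.1 + p.2) / ((p.1 ! : ℝ) * (p.2 ! : ℝ)) * σ₁ ^ p.1 * σ₂ ^ p.2 :=
      rfl
    rw [hFp, (Finset.HasAntidiagonal.mem_antidiagonal.mp hp)]
  -- summability of |F| via the sigma equivalence
  have hFabs : Summable (fun p : ℕ × ℕ => |F p|) := by
    rw [← Finset.HasAntidiagonal.sigmaAntidiagonalEquivProd.summable_iff]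
    refine (summable_sigma_of_nonneg fun _ => abs_nonneg _).mpr ⟨fun n => .of_finite, ?_⟩
    have heq : ∀ n : ℕ, (∑' p : (Finset.HasAntidiagonal.antidiagonal n : Finset (ℕ × ℕ)),
        |F (Finset.HasAntidiagonal.sigmaAntidiagonalEquivProd ⟨n, p⟩)|) =
        |pochR α n| / (n ! : ℝ) * (|σ₁| + |σ₂|) ^ n := by
      intro n
      have : (∑' p : (Finset.HasAntidiagonal.antidiagonal n : Finset (ℕ × ℕ)),
          |F (Finset.HasAntidiagonal.sigmaAntidiagonalEquivProd ⟨n, p⟩)|) =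
          ∑' p : (Finset.HasAntidiagonal.antidiagonal n : Finset (ℕ × ℕ)), |F p| := by
        refine tsum_congr fun p => ?_
        rfl
      rw [this]
      rw [Finset.tsum_subtype (Finset.HasAntidiagonal.antidiagonal n) (fun q => |F q|)]
      exact hfiber n
    refine Summable.congr ?_ fun n => (heq n).symm
    refine (summable_abs_poch α hσnn hconv).congr fun n => ?_
    ring
  have hFsum : Summable F := summable_abs_iff.mp hFabs
  have hFsig : Summable (fun q : Σ n : ℕ, (Finset.HasAntidiagonal.antidiagonal n : Finset (ℕ × ℕ)) =>
      F (Finset.HasAntidiagonal.sigmaAntidiagonalEquivProd q)) :=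
    Finset.HasAntidiagonal.sigmaAntidiagonalEquivProd.summable_iff.mpr hFsum
  -- tsum of F equals the one-variable series
  have hTsum : ∑' p : ℕ × ℕ, F p = (1 - s) ^ (-α) := by
    rw [← Finset.HasAntidiagonal.sigmaAntidiagonalEquivProd.tsum_eq F]
    rw [Summable.tsum_sigma' (fun n => .of_finite) hFsig]
    have : ∀ n : ℕ, (∑' p : (Finset.HasAntidiagonal.antidiagonal n : Finset (ℕ × ℕ)),
        F (Finset.HasAntidiagonal.sigmaAntidiagonalEquivProd ⟨n, p⟩)) = pochR α n / (n ! : ℝ) * s ^ n := by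
      intro n
      have h : (∑' p : (Finset.HasAntidiagonal.antidiagonal n : Finset (ℕ × ℕ)),
          F (Finset.HasAntidiagonal.sigmaAntidiagonalEquivProd ⟨n, p⟩)) =
          ∑' p : (Finset.HasAntidiagonal.antidiagonal n : Finset (ℕ × ℕ)), F p := tsum_congr fun p => rfl
      rw [h, Finset.tsum_subtype (Finset.HasAntidiagonal.antidiagonal n) F]
      exact hfiberF n
    rw [tsum_congr this]
    exact (binomial_hasSum α habs).tsum_eq
  -- the iterated sum equals the tsum over the product
  have hiter : (∑' i : ℕ, ∑' j : ℕ,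
      pochR α (i + j) / ((Nat.factorial i : ℝ) * (Nat.factorial j : ℝ)) *
        σ₁ ^ i * σ₂ ^ j) = ∑' p : ℕ × ℕ, F p := by
    rw [Summable.tsum_prod' hFsum fun i => (hFsum.prod_factor i)]
  -- rpow multiplicativity for positive second factor
  have hPprod : (P * (1 - s)) ^ (-α) = P ^ (-α) * (1 - s) ^ (-α) := by
    rcases lt_or_gt_of_ne hPne with h | h
    · have hPc : P * (1 - s) < 0 := mul_neg_of_neg_of_pos h h1s
      rw [Real.rpow_def_of_neg hPc, Real.rpow_def_of_neg h, Real.rpow_def_of_pos h1s,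
        Real.log_mul (ne_of_lt h) (ne_of_gt h1s), add_mul, Real.exp_add]
      ring
    · exact Real.mul_rpow h.le h1s.le
  rw [halg, hPprod, hiter, hTsum]
end

section
/- For Re(α) > 0, Re(β₁) > 0, Re(β₂) > 0 and x, y, z small, H_B(α, β₁, β₂; γ₁, γ₂, γ₃; x, y, z) = [1/(Γ(α)Γ(β₁)Γ(β₂))] ∫₀^∞∫₀^∞∫₀^∞ e^{-ξ-η-ζ} ξ^{α-1} η^{β₁-1} ζ^{β₂-1} ₀F₁(γ₁; xξη) ₀F₁(γ₂; yηζ) ₀F₁(γ₃; zξζ) dξ dη dζ. -/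
open Complex MeasureTheory Set Finset

/-- Pochhammer symbol `(x)_k`. -/
noncomputable def poch (x : ℂ) (k : ℕ) : ℂ := (ascPochhammer ℂ k).eval x

/-- Srivastava's triple hypergeometric function `H_B`. -/
noncomputable def srivastavaHB (α β₁ β₂ γ₁ γ₂ γ₃ : ℂ) (x y z : ℝ) : ℂ :=
  ∑' m : ℕ, ∑' n : ℕ, ∑' p : ℕ,
    poch α (m + p) * poch β₁ (m + n) * poch β₂ (n + p) *
      (x : ℂ) ^ m * (y : ℂ) ^ n * (z : ℂ) ^ p /
      (poch γ₁ m * poch γ₂ n * poch γ₃ p *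
        (Nat.factorial m : ℂ) * (Nat.factorial n : ℂ) * (Nat.factorial p : ℂ))

/-- The confluent hypergeometric limit function `₀F₁(c; t)`. -/
noncomputable def hyp0F1 (c : ℂ) (t : ℝ) : ℂ :=
  ∑' k : ℕ, (t : ℂ) ^ k / (poch c k * (Nat.factorial k : ℂ))

lemma poch_succ (x : ℂ) (k : ℕ) : poch x (k+1) = poch x k * (x + k) := by
  simp [poch, ascPochhammer_succ_right]

lemma poch_prod (x : ℂ) (k : ℕ) : poch x k = ∏ j ∈ Finset.range k, (x + j) := by
  induction k with
  | zero => simp [poch]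
  | succ k ih => rw [poch_succ, ih, Finset.prod_range_succ]

lemma poch_factor_ne_zero {γ : ℂ} {k : ℕ} (h : poch γ k ≠ 0) {j : ℕ} (hj : j < k) :
    γ + j ≠ 0 := by
  rw [poch_prod] at h
  exact fun hc => h (Finset.prod_eq_zero (Finset.mem_range.2 hj) hc)

lemma poch_lower (γ : ℂ) :
    ∃ c > 0, ∀ k : ℕ, poch γ k ≠ 0 → c * (Nat.factorial k : ℝ) / 4 ^ k ≤ ‖poch γ k‖ := by
  set M : ℕ := ⌈2 * ‖γ‖⌉₊ + 1 with hM
  -- lower bound for large j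
  have hbig : ∀ j : ℕ, M ≤ j → ((j:ℝ) + 1) / 4 ≤ ‖γ + j‖ := by
    intro j hj
    have h1 : (1:ℝ) ≤ j := by
      have : 1 ≤ M := Nat.le_add_left 1 _
      exact_mod_cast this.trans hj
    have h2 : 2 * ‖γ‖ ≤ j := by
      have := Nat.ceil_le.1 (le_refl ⌈2 * ‖γ‖⌉₊)
      have : (⌈2 * ‖γ‖⌉₊ : ℝ) ≤ j := by exact_mod_cast Nat.le_of_succ_le hj
      linarith [Nat.le_ceil (2 * ‖γ‖)]
    have h3 : ‖γ + j‖ ≥ (j:ℝ) - ‖γ‖ := by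
      have := norm_sub_norm_le ((j:ℂ)) (-γ)
      have he : (j:ℂ) - -γ = γ + j := by ring
      rw [he] at this
      simpa [norm_neg, norm_natCast] using this
    have : ‖γ‖ ≤ (j:ℝ)/2 := by linarith
    have h4 : (j:ℝ)/2 ≤ ‖γ + j‖ := by linarith
    linarith
  set δ : ℝ := (Finset.range M).inf' ⟨0, by simp [hM]⟩
      (fun j => if γ + (j:ℕ) = 0 then 1 else 4 * ‖γ + j‖ / ((j:ℝ) + 1)) with hδ
  have hδpos : 0 < δ := by
    rw [hδ]; refine (Finset.lt_inf'_iff _).2 ?_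
    intro j _
    by_cases h : γ + (j:ℕ) = 0
    · simp [h]
    · simp only [h, if_false]
      have hn : 0 < ‖γ + (j:ℕ)‖ := norm_pos_iff.2 h
      positivity
  have hδle : ∀ j : ℕ, j < M → γ + j ≠ 0 → δ * ((j:ℝ) + 1) / 4 ≤ ‖γ + j‖ := by
    intro j hj h0
    have := Finset.inf'_le (fun j : ℕ => if γ + (j:ℕ) = 0 then 1 else 4 * ‖γ + j‖ / ((j:ℝ) + 1))
      (Finset.mem_range.2 hj)
    rw [if_neg h0] at this
    rw [← hδ] at this
    have hj1 : (0:ℝ) < (j:ℝ) + 1 := by positivity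
    rw [le_div_iff₀ hj1] at this
    linarith
  refine ⟨(min δ 1) ^ M, by positivity, fun k hk => ?_⟩
  have hnorm : ‖poch γ k‖ = ∏ j ∈ Finset.range k, ‖γ + j‖ := by
    rw [poch_prod]; exact norm_prod _ _
  have key : ∀ j ∈ Finset.range k,
      (if j < M then min δ 1 else 1) * (((j:ℝ) + 1) / 4) ≤ ‖γ + j‖ := by
    intro j hj
    by_cases hjM : j < M
    · rw [if_pos hjM]
      have h0 := poch_factor_ne_zero hk (Finset.mem_range.1 hj)
      have := hδle j hjM h0
      have hd1 : min δ 1 ≤ δ := min_le_left _ _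
      have : min δ 1 * (((j:ℝ)+1)/4) ≤ δ * (((j:ℝ)+1)/4) := by
        apply mul_le_mul_of_nonneg_right hd1; positivity
      calc min δ 1 * (((j:ℝ)+1)/4) ≤ δ * (((j:ℝ)+1)/4) := this
        _ = δ * ((j:ℝ)+1) / 4 := by ring
        _ ≤ ‖γ + j‖ := hδle j hjM h0
    · rw [if_neg hjM, one_mul]
      exact hbig j (le_of_not_gt hjM)
  have hprodle : ∏ j ∈ Finset.range k, ((if j < M then min δ 1 else 1) * (((j:ℝ) + 1) / 4))
      ≤ ∏ j ∈ Finset.range k, ‖γ + j‖ := by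
    apply Finset.prod_le_prod
    · intro j _
      have : (0:ℝ) < min δ 1 := by positivity
      by_cases hjM : j < M <;> simp [hjM] <;> positivity
    · exact key
  rw [Finset.prod_mul_distrib] at hprodle
  have hfact : ∏ j ∈ Finset.range k, (((j:ℝ) + 1) / 4) = (Nat.factorial k : ℝ) / 4 ^ k := by
    rw [Finset.prod_div_distrib]
    congr 1
    · exact_mod_cast Finset.prod_range_add_one_eq_factorial k
    · simp
  have hmin1 : min δ 1 ≤ 1 := min_le_right _ _
  have hmin0 : 0 < min δ 1 := by positivity
  have hifprod : (min δ 1) ^ M ≤ ∏ j ∈ Finset.range k, (if j < M then min δ 1 else 1) := by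
    rcases le_or_gt k M with hkM | hMk
    · have : ∏ j ∈ Finset.range k, (if j < M then min δ 1 else 1) = (min δ 1) ^ k := by
        rw [Finset.prod_congr rfl (fun j hj => if_pos ((Finset.mem_range.1 hj).trans_le hkM))]
        simp
      rw [this]
      exact pow_le_pow_of_le_one hmin0.le hmin1 hkM
    · have hsplit := Finset.prod_range_mul_prod_Ico
        (fun j => if j < M then min δ 1 else 1) hMk.le
      rw [← hsplit]
      have h1 : ∏ j ∈ Finset.range M, (if j < M then min δ 1 else 1) = (min δ 1) ^ M := by
        rw [Finset.prod_congr rfl (fun j hj => if_pos (Finset.mem_range.1 hj))]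
        simp
      have h2 : ∏ j ∈ Finset.Ico M k, (if j < M then min δ 1 else 1) = 1 := by
        apply Finset.prod_eq_one
        intro j hj
        rw [if_neg (not_lt.2 (Finset.mem_Ico.1 hj).1)]
      rw [h1, h2, mul_one]
  calc (min δ 1) ^ M * (Nat.factorial k : ℝ) / 4 ^ k
      = (min δ 1) ^ M * ((Nat.factorial k : ℝ) / 4 ^ k) := by ring
    _ ≤ (∏ j ∈ Finset.range k, (if j < M then min δ 1 else 1)) * ((Nat.factorial k : ℝ) / 4 ^ k) := by
        apply mul_le_mul_of_nonneg_right hifprod; positivity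
    _ = (∏ j ∈ Finset.range k, (if j < M then min δ 1 else 1)) *
        ∏ j ∈ Finset.range k, (((j:ℝ) + 1) / 4) := by rw [hfact]
    _ ≤ ∏ j ∈ Finset.range k, ‖γ + j‖ := hprodle
    _ = ‖poch γ k‖ := hnorm.symm
lemma choose_le_two_pow' (n k : ℕ) : n.choose k ≤ 2 ^ n := by
  rcases le_or_gt k n with h | h
  · calc n.choose k ≤ ∑ m ∈ Finset.range (n+1), n.choose m :=
        Finset.single_le_sum (fun i _ => Nat.zero_le _) (Finset.mem_range.2 (Nat.lt_succ_of_le h))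
      _ = 2 ^ n := Nat.sum_range_choose n
  · rw [Nat.choose_eq_zero_of_lt h]; exact Nat.zero_le _

lemma factorial_add_le (n p : ℕ) :
    ((n + p).factorial : ℝ) ≤ 2 ^ (n + p) * n.factorial * p.factorial := by
  have h := Nat.add_choose_mul_factorial_mul_factorial n p
  have h2 : (n + p).choose p ≤ 2 ^ (n + p) := choose_le_two_pow' _ _
  have : (n+p).factorial ≤ 2 ^ (n+p) * n.factorial * p.factorial := by
    calc (n+p).factorial = (n+p).choose p * n.factorial * p.factorial := h.symm
      _ ≤ 2 ^ (n+p) * n.factorial * p.factorial := by gcongr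
  exact_mod_cast this

lemma realGamma_add_nat {a : ℝ} (ha : 0 < a) (k : ℕ) :
    Real.Gamma (a + k) = (∏ j ∈ Finset.range k, (a + j)) * Real.Gamma a := by
  induction k with
  | zero => simp
  | succ k ih =>
    have hne : a + k ≠ 0 := by positivity
    have h : Real.Gamma (a + (k+1:ℕ)) = (a + k) * Real.Gamma (a + k) := by
      have := Real.Gamma_add_one hne
      rw [← this]; norm_num [add_assoc]
    rw [h, ih, Finset.prod_range_succ]; ring

lemma prod_cast_ascFactorial (A k : ℕ) :
    ∏ j ∈ Finset.range k, ((A:ℝ) + (j:ℝ)) = (A.ascFactorial k : ℝ) := by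
  induction k with
  | zero => simp
  | succ k ih => rw [Finset.prod_range_succ, ih, Nat.ascFactorial_succ]; push_cast; ring

lemma realGamma_ub {a : ℝ} (ha : 0 < a) :
    ∃ K > 0, ∀ k : ℕ, Real.Gamma (a + k) ≤ K * 2 ^ k * k.factorial := by
  set A : ℕ := ⌈a⌉₊ with hA
  have haA : a ≤ A := Nat.le_ceil a
  refine ⟨Real.Gamma a * 2 ^ A, by positivity, fun k => ?_⟩
  have hprod : ∏ j ∈ Finset.range k, (a + (j:ℝ)) ≤ 2 ^ A * 2 ^ k * k.factorial := by
    have h1 : ∏ j ∈ Finset.range k, (a + (j:ℝ)) ≤ ∏ j ∈ Finset.range k, ((A:ℝ) + j) := by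
      apply Finset.prod_le_prod
      · intro j _; positivity
      · intro j _; have : (0:ℝ) ≤ j := Nat.cast_nonneg j; linarith
    have h3 : A.ascFactorial k ≤ 2 ^ A * 2 ^ k * k.factorial := by
      rw [Nat.ascFactorial_eq_factorial_mul_choose']
      calc k.factorial * (A + k - 1).choose k ≤ k.factorial * 2 ^ (A + k - 1) :=
            Nat.mul_le_mul_left _ (choose_le_two_pow' _ _)
        _ ≤ k.factorial * 2 ^ (A + k) :=
            Nat.mul_le_mul_left _ (Nat.pow_le_pow_right (by norm_num) (Nat.sub_le _ _))
        _ = 2 ^ A * 2 ^ k * k.factorial := by rw [pow_add]; ring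
    calc ∏ j ∈ Finset.range k, (a + (j:ℝ)) ≤ (A.ascFactorial k : ℝ) := by
          rw [← prod_cast_ascFactorial]; exact h1
      _ ≤ 2 ^ A * 2 ^ k * k.factorial := by exact_mod_cast h3
  have hΓpos : 0 < Real.Gamma a := Real.Gamma_pos_of_pos ha
  calc Real.Gamma (a + k) = (∏ j ∈ Finset.range k, (a + j)) * Real.Gamma a :=
        realGamma_add_nat ha k
    _ ≤ (2 ^ A * 2 ^ k * k.factorial) * Real.Gamma a := by
        apply mul_le_mul_of_nonneg_right hprod hΓpos.le
    _ = Real.Gamma a * 2 ^ A * 2 ^ k * k.factorial := by ring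

lemma norm_Gamma_le {z : ℂ} (hz : 0 < z.re) : ‖Complex.Gamma z‖ ≤ Real.Gamma z.re := by
  rw [Complex.Gamma_eq_integral hz, Real.Gamma_eq_integral hz]
  calc ‖∫ x in Ioi (0:ℝ), ↑(Real.exp (-x)) * (x:ℂ) ^ (z - 1)‖
      ≤ ∫ x in Ioi (0:ℝ), ‖↑(Real.exp (-x)) * (x:ℂ) ^ (z - 1)‖ := norm_integral_le_integral_norm _
    _ = ∫ x in Ioi (0:ℝ), Real.exp (-x) * x ^ (z.re - 1) := by
        apply setIntegral_congr_fun measurableSet_Ioi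
        intro t ht
        show ‖↑(Real.exp (-t)) * (t:ℂ) ^ (z - 1)‖ = Real.exp (-t) * t ^ (z.re - 1)
        rw [norm_mul, Complex.norm_real, Real.norm_eq_abs, abs_of_pos (Real.exp_pos _),
          Complex.norm_cpow_eq_rpow_re_of_pos ht]
        simp
lemma Gamma_add_nat' {s : ℂ} (hs : 0 < s.re) (k : ℕ) :
    Complex.Gamma (s + k) = poch s k * Complex.Gamma s := by
  induction k with
  | zero => simp [poch]
  | succ k ih =>
    have hne : s + k ≠ 0 := by
      intro h
      have := congrArg Complex.re h
      simp at this
      have : (0:ℝ) ≤ (k:ℝ) := Nat.cast_nonneg k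
      linarith [congrArg Complex.re h, Complex.add_re s k]
    have h : Complex.Gamma (s + (k+1:ℕ)) = (s + k) * Complex.Gamma (s + k) := by
      have := Complex.Gamma_add_one (s + k) hne
      rw [← this]; push_cast; ring_nf
    rw [h, ih, poch_succ]; ring

noncomputable def Eker (s : ℂ) (k : ℕ) (t : ℝ) : ℂ :=
  (Real.exp (-t) : ℂ) * (t:ℂ) ^ (s - 1) * (t:ℂ) ^ k

lemma Eker_eq {s : ℂ} {k : ℕ} {t : ℝ} (ht : 0 < t) :
    Eker s k t = (Real.exp (-t) : ℂ) * (t:ℂ) ^ ((s + k) - 1) := by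
  rw [Eker, mul_assoc]
  congr 1
  rw [← Complex.cpow_natCast (t:ℂ) k, ← Complex.cpow_add _ _ (by exact_mod_cast ht.ne')]
  congr 1
  ring

lemma Eker_integrableOn {s : ℂ} (hs : 0 < s.re) (k : ℕ) :
    IntegrableOn (Eker s k) (Ioi (0:ℝ)) := by
  have hre : 0 < (s + k).re := by
    simp only [Complex.add_re, Complex.natCast_re]
    positivity
  have := Complex.GammaIntegral_convergent hre
  apply this.congr_fun _ measurableSet_Ioi
  intro t ht
  exact (Eker_eq ht).symm

lemma Eker_integral {s : ℂ} (hs : 0 < s.re) (k : ℕ) :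
    ∫ t in Ioi (0:ℝ), Eker s k t = Complex.Gamma (s + k) := by
  have hre : 0 < (s + k).re := by
    simp only [Complex.add_re, Complex.natCast_re]; positivity
  rw [Complex.Gamma_eq_integral hre]
  apply setIntegral_congr_fun measurableSet_Ioi
  intro t ht
  exact Eker_eq ht

lemma Eker_norm {s : ℂ} {k : ℕ} {t : ℝ} (ht : 0 < t) :
    ‖Eker s k t‖ = Real.exp (-t) * t ^ (s.re - 1) * t ^ k := by
  rw [Eker, norm_mul, norm_mul, Complex.norm_real, Real.norm_eq_abs,
    abs_of_pos (Real.exp_pos _), Complex.norm_cpow_eq_rpow_re_of_pos ht,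
    norm_pow, Complex.norm_real, Real.norm_eq_abs, abs_of_pos ht]
  simp

lemma Eker_norm_integral {s : ℂ} (hs : 0 < s.re) (k : ℕ) :
    ∫ t in Ioi (0:ℝ), ‖Eker s k t‖ = Real.Gamma (s.re + k) := by
  have h0 : (0:ℝ) < s.re + k := by positivity
  rw [Real.Gamma_eq_integral h0]
  apply setIntegral_congr_fun measurableSet_Ioi
  intro t ht
  show ‖Eker s k t‖ = Real.exp (-t) * t ^ (s.re + (k:ℝ) - 1)
  rw [Eker_norm ht]
  rw [mul_assoc, ← Real.rpow_natCast t k, ← Real.rpow_add ht]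
  congr 2
  ring

lemma exchange {ι : Type*} [Countable ι] {s : ℂ} (hs : 0 < s.re) (c : ι → ℂ) (k : ι → ℕ)
    (h : Summable fun i => ‖c i‖ * Real.Gamma (s.re + k i)) :
    ∫ t in Ioi (0:ℝ), ∑' i, c i * Eker s (k i) t = ∑' i, c i * Complex.Gamma (s + k i) := by
  rw [← MeasureTheory.integral_tsum_of_summable_integral_norm]
  · exact tsum_congr fun i => by
      rw [MeasureTheory.integral_const_mul, Eker_integral hs]
  · intro i
    exact (Eker_integrableOn hs (k i)).const_mul (c i)
  · apply h.congr
    intro i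
    rw [← Eker_norm_integral hs (k i), ← MeasureTheory.integral_const_mul]
    congr 1
    ext t
    rw [norm_mul]
lemma summable3 {f g h : ℕ → ℝ} (hf : Summable f) (hg : Summable g) (hh : Summable h)
    (hf0 : ∀ m, 0 ≤ f m) (hg0 : ∀ n, 0 ≤ g n) (hh0 : ∀ p, 0 ≤ h p) :
    Summable (fun i : (ℕ × ℕ) × ℕ => f i.1.1 * g i.1.2 * h i.2) := by
  have h1 : Summable (fun q : ℕ × ℕ => f q.1 * g q.2) := hf.mul_of_nonneg hg hf0 hg0
  have h2 := h1.mul_of_nonneg hh (fun q => mul_nonneg (hf0 _) (hg0 _)) hh0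
  exact h2

lemma tsum3_mul {f g h : ℕ → ℂ} (hf : Summable fun m => ‖f m‖) (hg : Summable fun n => ‖g n‖)
    (hh : Summable fun p => ‖h p‖) :
    (∑' m, f m) * (∑' n, g n) * (∑' p, h p) =
      ∑' i : (ℕ × ℕ) × ℕ, f i.1.1 * g i.1.2 * h i.2 := by
  rw [tsum_mul_tsum_of_summable_norm hf hg]
  rw [tsum_mul_tsum_of_summable_norm (hf.mul_norm hg) hh]

lemma tsum3_nested {f : (ℕ × ℕ) × ℕ → ℂ} (hf : Summable f) :
    ∑' i, f i = ∑' m, ∑' n, ∑' p, f ((m, n), p) := by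
  have hfib : ∀ q : ℕ × ℕ, Summable fun p => f (q, p) := hf.prod_factor
  have hsum' : Summable (fun q : ℕ × ℕ => ∑' p, f (q, p)) :=
    ⟨_, hf.hasSum.prod_fiberwise (fun q => (hfib q).hasSum)⟩
  rw [Summable.tsum_prod' hf hfib, Summable.tsum_prod' hsum' hsum'.prod_factor]

lemma inv_poch_bound (γ : ℂ) :
    ∃ C > 0, ∀ k : ℕ, ‖(poch γ k * (k.factorial : ℂ))⁻¹‖ ≤
      C * 4 ^ k / ((k.factorial : ℝ) * k.factorial) := by
  obtain ⟨c, hc, hlow⟩ := poch_lower γ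
  refine ⟨1 / c, by positivity, fun k => ?_⟩
  have hkf : (0:ℝ) < (k.factorial : ℝ) := by exact_mod_cast k.factorial_pos
  by_cases h : poch γ k = 0
  · rw [h, zero_mul, inv_zero, norm_zero]
    positivity
  · have hlb := hlow k h
    have hpos : 0 < ‖poch γ k‖ := norm_pos_iff.2 h
    rw [norm_inv, norm_mul, Complex.norm_natCast]
    have h4 : (0:ℝ) < 4 ^ k := by positivity
    have hlb' : 0 < c * (k.factorial : ℝ) / 4 ^ k := by positivity
    rw [inv_le_comm₀ (by positivity) (by positivity)]
    calc (1 / c * 4 ^ k / ((k.factorial:ℝ) * k.factorial))⁻¹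
        = c * k.factorial / 4 ^ k * k.factorial := by
          field_simp
        _ ≤ ‖poch γ k‖ * k.factorial := by
          exact mul_le_mul_of_nonneg_right hlb hkf.le
    
section shapes
variable {cc : ℕ → ℂ} {C u : ℝ} (hC : 0 ≤ C) (hu : 0 ≤ u)
  (hcc : ∀ k, ‖cc k‖ ≤ C * (4*u)^k / ((k.factorial:ℝ) * k.factorial))

include hC hu hcc

lemma shape1 {s : ℝ} (hs : 0 ≤ s) (k : ℕ) :
    ‖cc k‖ * s^k ≤ C * (4*u*s)^k / k.factorial := by
  have hkf : (0:ℝ) < k.factorial := by exact_mod_cast k.factorial_pos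
  have h1 : (1:ℝ) ≤ k.factorial := by exact_mod_cast k.factorial_pos
  calc ‖cc k‖ * s^k ≤ (C * (4*u)^k / (k.factorial * k.factorial)) * s^k := by
        apply mul_le_mul_of_nonneg_right (hcc k) (by positivity)
    _ = (C * ((4*u)^k * s^k) / k.factorial) / k.factorial := by ring
    _ ≤ C * ((4*u)^k * s^k) / k.factorial / 1 := by
        apply div_le_div_of_nonneg_left _ _ h1 <;> positivity
    _ = C * (4*u*s)^k / k.factorial := by rw [← mul_pow]; ring

lemma shape2 {s : ℝ} (hs : 0 ≤ s) (k : ℕ) :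
    ‖cc k‖ * (s^k * (4^k * k.factorial)) ≤ C * (16*u*s)^k / k.factorial := by
  have hkf : (0:ℝ) < k.factorial := by exact_mod_cast k.factorial_pos
  calc ‖cc k‖ * (s^k * (4^k * k.factorial))
      ≤ (C * (4*u)^k / (k.factorial * k.factorial)) * (s^k * (4^k * k.factorial)) := by
        apply mul_le_mul_of_nonneg_right (hcc k) (by positivity)
    _ = C * ((4*u)^k * s^k * 4^k) / k.factorial := by field_simp
    _ = C * (16*u*s)^k / k.factorial := by
        rw [show (4*u)^k * s^k * 4^k = (16*u*s)^k by rw [← mul_pow, ← mul_pow]; congr 1; ring]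

lemma shape3 (k : ℕ) :
    ‖cc k‖ * ((4^k * k.factorial) * (4^k * k.factorial)) ≤ C * (64*u)^k := by
  have hkf : (0:ℝ) < k.factorial := by exact_mod_cast k.factorial_pos
  calc ‖cc k‖ * ((4^k * k.factorial) * (4^k * k.factorial))
      ≤ (C * (4*u)^k / (k.factorial * k.factorial)) * ((4^k * k.factorial) * (4^k * k.factorial)) := by
        apply mul_le_mul_of_nonneg_right (hcc k) (by positivity)
    _ = C * ((4*u)^k * 4^k * 4^k) := by field_simp
    _ = C * (64*u)^k := by
        rw [show (4*u)^k * 4^k * 4^k = (64*u)^k by rw [← mul_pow, ← mul_pow]; congr 1; ring]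

end shapes

lemma gamma_split_bound {a K : ℝ}
    (hK : ∀ k : ℕ, Real.Gamma (a + k) ≤ K * 2^k * k.factorial) (hK0 : 0 ≤ K) (m p : ℕ) :
    Real.Gamma (a + ((m + p : ℕ) : ℝ)) ≤ K * ((4^m * m.factorial) * (4^p * p.factorial)) := by
  have hfac : ((m+p).factorial : ℝ) ≤ 2^(m+p) * m.factorial * p.factorial := by
    have h := Nat.add_choose_mul_factorial_mul_factorial m p
    have h2 : (m + p).choose p ≤ 2 ^ (m + p) := by
      rcases le_or_gt p (m+p) with hh | hh
      · calc (m+p).choose p ≤ ∑ j ∈ Finset.range (m+p+1), (m+p).choose j :=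
            Finset.single_le_sum (fun i _ => Nat.zero_le _)
              (Finset.mem_range.2 (Nat.lt_succ_of_le hh))
          _ = 2 ^ (m+p) := Nat.sum_range_choose _
      · omega
    have : (m+p).factorial ≤ 2 ^ (m+p) * m.factorial * p.factorial := by
      calc (m+p).factorial = (m+p).choose p * m.factorial * p.factorial := h.symm
        _ ≤ 2 ^ (m+p) * m.factorial * p.factorial := by gcongr
    exact_mod_cast this
  have h44 : (2:ℝ)^(m+p) * 2^(m+p) = 4^m * 4^p := by rw [← mul_pow, pow_add]; norm_num
  calc Real.Gamma (a + ((m+p:ℕ):ℝ)) ≤ K * 2^(m+p) * (m+p).factorial := hK (m+p)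
    _ ≤ K * 2^(m+p) * (2^(m+p) * m.factorial * p.factorial) := by
        apply mul_le_mul_of_nonneg_left hfac (by positivity)
    _ = (2^(m+p) * 2^(m+p)) * (K * m.factorial * p.factorial) := by ring
    _ = (4^m * 4^p) * (K * m.factorial * p.factorial) := by rw [h44]
    _ = K * ((4^m * m.factorial) * (4^p * p.factorial)) := by ring
lemma norm_ofReal_pow_mul_pow {a b : ℝ} (ha : 0 < a) (hb : 0 < b) (m n : ℕ) :
    ‖((a:ℂ)^m * (b:ℂ)^n)‖ = a^m * b^n := by
  rw [norm_mul, norm_pow, norm_pow, Complex.norm_real, Complex.norm_real,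
    Real.norm_eq_abs, Real.norm_eq_abs, abs_of_pos ha, abs_of_pos hb]

set_option maxHeartbeats 1000000 in
/-- Integral representation (6.6) for `H_B`, valid for `x, y, z` sufficiently small. -/
theorem srivastavaHB_integral (α β₁ β₂ γ₁ γ₂ γ₃ : ℂ)
    (hα : 0 < α.re) (hβ₁ : 0 < β₁.re) (hβ₂ : 0 < β₂.re) :
    ∃ ε > (0:ℝ), ∀ x y z : ℝ, |x| < ε → |y| < ε → |z| < ε →
      srivastavaHB α β₁ β₂ γ₁ γ₂ γ₃ x y z =
        (1 / (Complex.Gamma α * Complex.Gamma β₁ * Complex.Gamma β₂)) *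
          ∫ ξ in Set.Ioi (0:ℝ), ∫ η in Set.Ioi (0:ℝ), ∫ ζ in Set.Ioi (0:ℝ),
            (Real.exp (-ξ - η - ζ) : ℂ) * (ξ : ℂ) ^ (α - 1) * (η : ℂ) ^ (β₁ - 1) *
              (ζ : ℂ) ^ (β₂ - 1) *
              hyp0F1 γ₁ (x * ξ * η) * hyp0F1 γ₂ (y * η * ζ) *
              hyp0F1 γ₃ (z * ξ * ζ) := by
  obtain ⟨C₁, hC₁, hB₁⟩ := inv_poch_bound γ₁
  obtain ⟨C₂, hC₂, hB₂⟩ := inv_poch_bound γ₂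
  obtain ⟨C₃, hC₃, hB₃⟩ := inv_poch_bound γ₃
  obtain ⟨Ka, hKa, hGa⟩ := realGamma_ub hα
  obtain ⟨Kb, hKb, hGb⟩ := realGamma_ub hβ₁
  obtain ⟨Kc, hKc, hGc⟩ := realGamma_ub hβ₂
  refine ⟨1/128, by norm_num, fun x y z hx hy hz => ?_⟩
  have hux : (0:ℝ) ≤ |x| := abs_nonneg x
  have huy : (0:ℝ) ≤ |y| := abs_nonneg y
  have huz : (0:ℝ) ≤ |z| := abs_nonneg z
  have h64x : 64 * |x| < 1 := by linarith
  have h64y : 64 * |y| < 1 := by linarith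
  have h64z : 64 * |z| < 1 := by linarith
  set cc₁ : ℕ → ℂ := fun k => (x:ℂ)^k * (poch γ₁ k * (k.factorial : ℂ))⁻¹ with hcc₁def
  set cc₂ : ℕ → ℂ := fun k => (y:ℂ)^k * (poch γ₂ k * (k.factorial : ℂ))⁻¹ with hcc₂def
  set cc₃ : ℕ → ℂ := fun k => (z:ℂ)^k * (poch γ₃ k * (k.factorial : ℂ))⁻¹ with hcc₃def
  have hcc₁ : ∀ k, ‖cc₁ k‖ ≤ C₁ * (4* |x|)^k / (k.factorial * k.factorial) := by
    intro k
    calc ‖cc₁ k‖ = |x|^k * ‖(poch γ₁ k * (k.factorial : ℂ))⁻¹‖ := by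
          rw [hcc₁def]
          simp [norm_mul, norm_pow, Complex.norm_real, Real.norm_eq_abs]
      _ ≤ |x|^k * (C₁ * 4^k / (k.factorial * k.factorial)) := by
          apply mul_le_mul_of_nonneg_left (hB₁ k) (by positivity)
      _ = C₁ * (4* |x|)^k / (k.factorial * k.factorial) := by rw [mul_pow]; ring
  have hcc₂ : ∀ k, ‖cc₂ k‖ ≤ C₂ * (4* |y|)^k / (k.factorial * k.factorial) := by
    intro k
    calc ‖cc₂ k‖ = |y|^k * ‖(poch γ₂ k * (k.factorial : ℂ))⁻¹‖ := by
          rw [hcc₂def]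
          simp [norm_mul, norm_pow, Complex.norm_real, Real.norm_eq_abs]
      _ ≤ |y|^k * (C₂ * 4^k / (k.factorial * k.factorial)) := by
          apply mul_le_mul_of_nonneg_left (hB₂ k) (by positivity)
      _ = C₂ * (4* |y|)^k / (k.factorial * k.factorial) := by rw [mul_pow]; ring
  have hcc₃ : ∀ k, ‖cc₃ k‖ ≤ C₃ * (4* |z|)^k / (k.factorial * k.factorial) := by
    intro k
    calc ‖cc₃ k‖ = |z|^k * ‖(poch γ₃ k * (k.factorial : ℂ))⁻¹‖ := by
          rw [hcc₃def]
          simp [norm_mul, norm_pow, Complex.norm_real, Real.norm_eq_abs]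
      _ ≤ |z|^k * (C₃ * 4^k / (k.factorial * k.factorial)) := by
          apply mul_le_mul_of_nonneg_left (hB₃ k) (by positivity)
      _ = C₃ * (4* |z|)^k / (k.factorial * k.factorial) := by rw [mul_pow]; ring
  -- norm of Gamma at shifted points
  have hnG : ∀ (s : ℂ), 0 < s.re → ∀ k : ℕ, ‖Complex.Gamma (s + k)‖ ≤ Real.Gamma (s.re + k) := by
    intro s hs k
    have h1 : 0 < (s + k).re := by
      simp only [Complex.add_re, Complex.natCast_re]
      positivity
    have h2 := norm_Gamma_le h1
    simpa only [Complex.add_re, Complex.natCast_re] using h2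
  -- pointwise expansion of the integrand
  have hexp : ∀ ξ : ℝ, 0 < ξ → ∀ η : ℝ, 0 < η → ∀ ζ : ℝ, 0 < ζ →
      (Real.exp (-ξ - η - ζ) : ℂ) * (ξ : ℂ) ^ (α - 1) * (η : ℂ) ^ (β₁ - 1) *
        (ζ : ℂ) ^ (β₂ - 1) * hyp0F1 γ₁ (x * ξ * η) * hyp0F1 γ₂ (y * η * ζ) *
        hyp0F1 γ₃ (z * ξ * ζ)
      = ∑' i : (ℕ × ℕ) × ℕ,
          (cc₁ i.1.1 * cc₂ i.1.2 * cc₃ i.2 * Eker α (i.1.1 + i.2) ξ *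
            Eker β₁ (i.1.1 + i.1.2) η) * Eker β₂ (i.1.2 + i.2) ζ := by
    intro ξ hξ η hη ζ hζ
    have h1 : hyp0F1 γ₁ (x * ξ * η) = ∑' m, cc₁ m * ((ξ:ℂ)^m * (η:ℂ)^m) := by
      rw [hyp0F1]
      apply tsum_congr; intro m
      rw [hcc₁def]
      push_cast
      rw [div_eq_mul_inv, mul_pow, mul_pow]
      ring
    have h2 : hyp0F1 γ₂ (y * η * ζ) = ∑' n, cc₂ n * ((η:ℂ)^n * (ζ:ℂ)^n) := by
      rw [hyp0F1]
      apply tsum_congr; intro n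
      rw [hcc₂def]
      push_cast
      rw [div_eq_mul_inv, mul_pow, mul_pow]
      ring
    have h3 : hyp0F1 γ₃ (z * ξ * ζ) = ∑' p, cc₃ p * ((ξ:ℂ)^p * (ζ:ℂ)^p) := by
      rw [hyp0F1]
      apply tsum_congr; intro p
      rw [hcc₃def]
      push_cast
      rw [div_eq_mul_inv, mul_pow, mul_pow]
      ring
    have hs1 : Summable fun m => ‖cc₁ m * ((ξ:ℂ)^m * (η:ℂ)^m)‖ := by
      apply Summable.of_nonneg_of_le (fun m => norm_nonneg _) (fun m => ?_)
        ((Real.summable_pow_div_factorial (4* |x| *(ξ*η))).mul_left C₁)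
      rw [norm_mul, norm_ofReal_pow_mul_pow hξ hη]
      calc ‖cc₁ m‖ * (ξ^m * η^m) = ‖cc₁ m‖ * (ξ*η)^m := by rw [mul_pow]
        _ ≤ C₁ * (4* |x| *(ξ*η))^m / m.factorial := shape1 hC₁.le hux hcc₁ (by positivity) m
        _ = C₁ * ((4* |x| *(ξ*η))^m / m.factorial) := by ring
    have hs2 : Summable fun n => ‖cc₂ n * ((η:ℂ)^n * (ζ:ℂ)^n)‖ := by
      apply Summable.of_nonneg_of_le (fun n => norm_nonneg _) (fun n => ?_)
        ((Real.summable_pow_div_factorial (4* |y| *(η*ζ))).mul_left C₂)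
      rw [norm_mul, norm_ofReal_pow_mul_pow hη hζ]
      calc ‖cc₂ n‖ * (η^n * ζ^n) = ‖cc₂ n‖ * (η*ζ)^n := by rw [mul_pow]
        _ ≤ C₂ * (4* |y| *(η*ζ))^n / n.factorial := shape1 hC₂.le huy hcc₂ (by positivity) n
        _ = C₂ * ((4* |y| *(η*ζ))^n / n.factorial) := by ring
    have hs3 : Summable fun p => ‖cc₃ p * ((ξ:ℂ)^p * (ζ:ℂ)^p)‖ := by
      apply Summable.of_nonneg_of_le (fun p => norm_nonneg _) (fun p => ?_)
        ((Real.summable_pow_div_factorial (4* |z| *(ξ*ζ))).mul_left C₃)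
      rw [norm_mul, norm_ofReal_pow_mul_pow hξ hζ]
      calc ‖cc₃ p‖ * (ξ^p * ζ^p) = ‖cc₃ p‖ * (ξ*ζ)^p := by rw [mul_pow]
        _ ≤ C₃ * (4* |z| *(ξ*ζ))^p / p.factorial := shape1 hC₃.le huz hcc₃ (by positivity) p
        _ = C₃ * ((4* |z| *(ξ*ζ))^p / p.factorial) := by ring
    have hexpsplit : (Real.exp (-ξ - η - ζ) : ℂ) =
        (Real.exp (-ξ) : ℂ) * (Real.exp (-η) : ℂ) * (Real.exp (-ζ) : ℂ) := by
      rw [show -ξ - η - ζ = (-ξ) + (-η) + (-ζ) by ring, Real.exp_add, Real.exp_add]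
      push_cast
      ring
    calc (Real.exp (-ξ - η - ζ) : ℂ) * (ξ : ℂ) ^ (α - 1) * (η : ℂ) ^ (β₁ - 1) *
          (ζ : ℂ) ^ (β₂ - 1) * hyp0F1 γ₁ (x * ξ * η) * hyp0F1 γ₂ (y * η * ζ) *
          hyp0F1 γ₃ (z * ξ * ζ)
        = ((Real.exp (-ξ - η - ζ) : ℂ) * (ξ : ℂ) ^ (α - 1) * (η : ℂ) ^ (β₁ - 1) *
            (ζ : ℂ) ^ (β₂ - 1)) *
          ((∑' m, cc₁ m * ((ξ:ℂ)^m * (η:ℂ)^m)) * (∑' n, cc₂ n * ((η:ℂ)^n * (ζ:ℂ)^n)) *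
            (∑' p, cc₃ p * ((ξ:ℂ)^p * (ζ:ℂ)^p))) := by
          rw [h1, h2, h3]; ring
      _ = ((Real.exp (-ξ - η - ζ) : ℂ) * (ξ : ℂ) ^ (α - 1) * (η : ℂ) ^ (β₁ - 1) *
            (ζ : ℂ) ^ (β₂ - 1)) *
          ∑' i : (ℕ × ℕ) × ℕ, (cc₁ i.1.1 * ((ξ:ℂ)^i.1.1 * (η:ℂ)^i.1.1)) *
            (cc₂ i.1.2 * ((η:ℂ)^i.1.2 * (ζ:ℂ)^i.1.2)) *
            (cc₃ i.2 * ((ξ:ℂ)^i.2 * (ζ:ℂ)^i.2)) := by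
          rw [tsum3_mul hs1 hs2 hs3]
      _ = ∑' i : (ℕ × ℕ) × ℕ,
            ((Real.exp (-ξ - η - ζ) : ℂ) * (ξ : ℂ) ^ (α - 1) * (η : ℂ) ^ (β₁ - 1) *
              (ζ : ℂ) ^ (β₂ - 1)) *
            ((cc₁ i.1.1 * ((ξ:ℂ)^i.1.1 * (η:ℂ)^i.1.1)) *
              (cc₂ i.1.2 * ((η:ℂ)^i.1.2 * (ζ:ℂ)^i.1.2)) *
              (cc₃ i.2 * ((ξ:ℂ)^i.2 * (ζ:ℂ)^i.2))) := tsum_mul_left.symm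
      _ = ∑' i : (ℕ × ℕ) × ℕ,
          (cc₁ i.1.1 * cc₂ i.1.2 * cc₃ i.2 * Eker α (i.1.1 + i.2) ξ *
            Eker β₁ (i.1.1 + i.1.2) η) * Eker β₂ (i.1.2 + i.2) ζ := by
          apply tsum_congr; intro i
          simp only [Eker, pow_add]
          rw [hexpsplit]
          ring
  -- summability at the ζ level
  have Sζ : ∀ ξ : ℝ, 0 < ξ → ∀ η : ℝ, 0 < η →
      Summable (fun i : (ℕ × ℕ) × ℕ =>
        ‖cc₁ i.1.1 * cc₂ i.1.2 * cc₃ i.2 * Eker α (i.1.1 + i.2) ξ *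
          Eker β₁ (i.1.1 + i.1.2) η‖ * Real.Gamma (β₂.re + ↑(i.1.2 + i.2))) := by
    intro ξ hξ η hη
    apply Summable.of_nonneg_of_le
      (fun i => by positivity)
      (fun i => ?_)
      (summable3
        ((Real.summable_pow_div_factorial (4* |x| *(ξ*η))).mul_left C₁)
        ((Real.summable_pow_div_factorial (16* |y| *η)).mul_left C₂)
        (((Real.summable_pow_div_factorial (16* |z| *ξ)).mul_left C₃).mul_right
          (Real.exp (-ξ) * ξ^(α.re-1) * (Real.exp (-η) * η^(β₁.re-1)) * Kc))
        (fun m => by positivity) (fun n => by positivity) (fun p => by positivity))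
    obtain ⟨⟨m, n⟩, p⟩ := i
    simp only
    rw [norm_mul, norm_mul, norm_mul, norm_mul, Eker_norm hξ, Eker_norm hη]
    calc ‖cc₁ m‖ * ‖cc₂ n‖ * ‖cc₃ p‖ * (Real.exp (-ξ) * ξ^(α.re-1) * ξ^(m+p)) *
          (Real.exp (-η) * η^(β₁.re-1) * η^(m+n)) * Real.Gamma (β₂.re + ↑(n + p))
        ≤ ‖cc₁ m‖ * ‖cc₂ n‖ * ‖cc₃ p‖ * (Real.exp (-ξ) * ξ^(α.re-1) * ξ^(m+p)) *
          (Real.exp (-η) * η^(β₁.re-1) * η^(m+n)) *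
          (Kc * ((4^n * n.factorial) * (4^p * p.factorial))) := by
          apply mul_le_mul_of_nonneg_left (gamma_split_bound hGc hKc.le n p) (by positivity)
      _ = (‖cc₁ m‖ * (ξ*η)^m) * (‖cc₂ n‖ * (η^n * (4^n * n.factorial))) *
          (‖cc₃ p‖ * (ξ^p * (4^p * p.factorial))) *
          (Real.exp (-ξ) * ξ^(α.re-1) * (Real.exp (-η) * η^(β₁.re-1)) * Kc) := by
          rw [pow_add, pow_add]; ring
      _ ≤ (C₁ * (4* |x| *(ξ*η))^m / m.factorial) * (C₂ * (16* |y| *η)^n / n.factorial) *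
          (C₃ * (16* |z| *ξ)^p / p.factorial) *
          (Real.exp (-ξ) * ξ^(α.re-1) * (Real.exp (-η) * η^(β₁.re-1)) * Kc) := by
          have b1 := shape1 hC₁.le hux hcc₁ (show (0:ℝ) ≤ ξ*η by positivity) m
          have b2 := shape2 hC₂.le huy hcc₂ hη.le n
          have b3 := shape2 hC₃.le huz hcc₃ hξ.le p
          have hn1 : (0:ℝ) ≤ ‖cc₁ m‖ * (ξ*η)^m := by positivity
          have hn2 : (0:ℝ) ≤ ‖cc₂ n‖ * (η^n * (4^n * n.factorial)) := by positivity
          have hn3 : (0:ℝ) ≤ ‖cc₃ p‖ * (ξ^p * (4^p * p.factorial)) := by positivity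
          apply mul_le_mul_of_nonneg_right _ (by positivity)
          apply mul_le_mul (mul_le_mul b1 b2 hn2 (by positivity)) b3 hn3 (by positivity)
      _ = (C₁ * ((4* |x| *(ξ*η))^m / m.factorial)) *
          (C₂ * ((16* |y| *η)^n / n.factorial)) *
          ((C₃ * ((16* |z| *ξ)^p / p.factorial)) *
            (Real.exp (-ξ) * ξ^(α.re-1) * (Real.exp (-η) * η^(β₁.re-1)) * Kc)) := by ring
  -- summability at the η level
  have Sη : ∀ ξ : ℝ, 0 < ξ →
      Summable (fun i : (ℕ × ℕ) × ℕ =>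
        ‖cc₁ i.1.1 * cc₂ i.1.2 * cc₃ i.2 * Eker α (i.1.1 + i.2) ξ *
          Complex.Gamma (β₂ + ↑(i.1.2 + i.2))‖ * Real.Gamma (β₁.re + ↑(i.1.1 + i.1.2))) := by
    intro ξ hξ
    apply Summable.of_nonneg_of_le
      (fun i => by positivity)
      (fun i => ?_)
      (summable3
        ((Real.summable_pow_div_factorial (16* |x| *ξ)).mul_left C₁)
        ((summable_geometric_of_lt_one (by positivity) h64y).mul_left C₂)
        (((Real.summable_pow_div_factorial (16* |z| *ξ)).mul_left C₃).mul_right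
          (Real.exp (-ξ) * ξ^(α.re-1) * (Kb * Kc)))
        (fun m => by positivity) (fun n => by positivity) (fun p => by positivity))
    obtain ⟨⟨m, n⟩, p⟩ := i
    simp only
    rw [norm_mul, norm_mul, norm_mul, norm_mul, Eker_norm hξ]
    calc ‖cc₁ m‖ * ‖cc₂ n‖ * ‖cc₃ p‖ * (Real.exp (-ξ) * ξ^(α.re-1) * ξ^(m+p)) *
          ‖Complex.Gamma (β₂ + ↑(n + p))‖ * Real.Gamma (β₁.re + ↑(m + n))
        ≤ ‖cc₁ m‖ * ‖cc₂ n‖ * ‖cc₃ p‖ * (Real.exp (-ξ) * ξ^(α.re-1) * ξ^(m+p)) *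
          (Kc * ((4^n * n.factorial) * (4^p * p.factorial))) *
          (Kb * ((4^m * m.factorial) * (4^n * n.factorial))) := by
          have g1 : ‖Complex.Gamma (β₂ + ↑(n + p))‖ ≤
              Kc * ((4^n * n.factorial) * (4^p * p.factorial)) :=
            (hnG β₂ hβ₂ (n+p)).trans (gamma_split_bound hGc hKc.le n p)
          have g2 : Real.Gamma (β₁.re + ↑(m + n)) ≤
              Kb * ((4^m * m.factorial) * (4^n * n.factorial)) :=
            gamma_split_bound hGb hKb.le m n
          apply mul_le_mul _ g2 (Real.Gamma_nonneg_of_nonneg (by positivity)) (by positivity)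
          exact mul_le_mul_of_nonneg_left g1 (by positivity)
      _ = (‖cc₁ m‖ * (ξ^m * (4^m * m.factorial))) *
          (‖cc₂ n‖ * ((4^n * n.factorial) * (4^n * n.factorial))) *
          (‖cc₃ p‖ * (ξ^p * (4^p * p.factorial))) *
          (Real.exp (-ξ) * ξ^(α.re-1) * (Kb * Kc)) := by
          rw [pow_add]; ring
      _ ≤ (C₁ * (16* |x| *ξ)^m / m.factorial) * (C₂ * (64* |y|)^n) *
          (C₃ * (16* |z| *ξ)^p / p.factorial) *
          (Real.exp (-ξ) * ξ^(α.re-1) * (Kb * Kc)) := by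
          have b1 := shape2 hC₁.le hux hcc₁ hξ.le m
          have b2 := shape3 hC₂.le huy hcc₂ n
          have b3 := shape2 hC₃.le huz hcc₃ hξ.le p
          apply mul_le_mul_of_nonneg_right _ (by positivity)
          apply mul_le_mul (mul_le_mul b1 b2 (by positivity) (by positivity)) b3
            (by positivity) (by positivity)
      _ = (C₁ * ((16* |x| *ξ)^m / m.factorial)) * (C₂ * (64* |y|)^n) *
          ((C₃ * ((16* |z| *ξ)^p / p.factorial)) *
            (Real.exp (-ξ) * ξ^(α.re-1) * (Kb * Kc))) := by ring
  -- summability at the ξ level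
  have Sξ : Summable (fun i : (ℕ × ℕ) × ℕ =>
      ‖cc₁ i.1.1 * cc₂ i.1.2 * cc₃ i.2 * Complex.Gamma (β₂ + ↑(i.1.2 + i.2)) *
        Complex.Gamma (β₁ + ↑(i.1.1 + i.1.2))‖ * Real.Gamma (α.re + ↑(i.1.1 + i.2))) := by
    apply Summable.of_nonneg_of_le
      (fun i => by positivity)
      (fun i => ?_)
      (summable3
        ((summable_geometric_of_lt_one (by positivity) h64x).mul_left C₁)
        ((summable_geometric_of_lt_one (by positivity) h64y).mul_left C₂)
        (((summable_geometric_of_lt_one (by positivity) h64z).mul_left C₃).mul_right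
          (Ka * Kb * Kc))
        (fun m => by positivity) (fun n => by positivity) (fun p => by positivity))
    obtain ⟨⟨m, n⟩, p⟩ := i
    simp only
    rw [norm_mul, norm_mul, norm_mul, norm_mul]
    calc ‖cc₁ m‖ * ‖cc₂ n‖ * ‖cc₃ p‖ * ‖Complex.Gamma (β₂ + ↑(n + p))‖ *
          ‖Complex.Gamma (β₁ + ↑(m + n))‖ * Real.Gamma (α.re + ↑(m + p))
        ≤ ‖cc₁ m‖ * ‖cc₂ n‖ * ‖cc₃ p‖ *
          (Kc * ((4^n * n.factorial) * (4^p * p.factorial))) *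
          (Kb * ((4^m * m.factorial) * (4^n * n.factorial))) *
          (Ka * ((4^m * m.factorial) * (4^p * p.factorial))) := by
          have g1 : ‖Complex.Gamma (β₂ + ↑(n + p))‖ ≤
              Kc * ((4^n * n.factorial) * (4^p * p.factorial)) :=
            (hnG β₂ hβ₂ (n+p)).trans (gamma_split_bound hGc hKc.le n p)
          have g2 : ‖Complex.Gamma (β₁ + ↑(m + n))‖ ≤
              Kb * ((4^m * m.factorial) * (4^n * n.factorial)) :=
            (hnG β₁ hβ₁ (m+n)).trans (gamma_split_bound hGb hKb.le m n)
          have g3 : Real.Gamma (α.re + ↑(m + p)) ≤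
              Ka * ((4^m * m.factorial) * (4^p * p.factorial)) :=
            gamma_split_bound hGa hKa.le m p
          apply mul_le_mul _ g3 (Real.Gamma_nonneg_of_nonneg (by positivity)) (by positivity)
          apply mul_le_mul _ g2 (norm_nonneg _) (by positivity)
          exact mul_le_mul_of_nonneg_left g1 (by positivity)
      _ = (‖cc₁ m‖ * ((4^m * m.factorial) * (4^m * m.factorial))) *
          (‖cc₂ n‖ * ((4^n * n.factorial) * (4^n * n.factorial))) *
          (‖cc₃ p‖ * ((4^p * p.factorial) * (4^p * p.factorial))) * (Ka * Kb * Kc) := by ring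
      _ ≤ (C₁ * (64* |x|)^m) * (C₂ * (64* |y|)^n) * (C₃ * (64* |z|)^p) * (Ka * Kb * Kc) := by
          have b1 := shape3 hC₁.le hux hcc₁ m
          have b2 := shape3 hC₂.le huy hcc₂ n
          have b3 := shape3 hC₃.le huz hcc₃ p
          apply mul_le_mul_of_nonneg_right _ (by positivity)
          apply mul_le_mul (mul_le_mul b1 b2 (by positivity) (by positivity)) b3
            (by positivity) (by positivity)
      _ = (C₁ * (64* |x|)^m) * (C₂ * (64* |y|)^n) * ((C₃ * (64* |z|)^p) * (Ka * Kb * Kc)) := by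
          ring
  -- the ζ-level exchange
  have hζswap : ∀ ξ : ℝ, 0 < ξ → ∀ η : ℝ, 0 < η →
      (∫ ζ in Set.Ioi (0:ℝ),
        (Real.exp (-ξ - η - ζ) : ℂ) * (ξ : ℂ) ^ (α - 1) * (η : ℂ) ^ (β₁ - 1) *
          (ζ : ℂ) ^ (β₂ - 1) * hyp0F1 γ₁ (x * ξ * η) * hyp0F1 γ₂ (y * η * ζ) *
          hyp0F1 γ₃ (z * ξ * ζ))
      = ∑' i : (ℕ × ℕ) × ℕ,
          (cc₁ i.1.1 * cc₂ i.1.2 * cc₃ i.2 * Eker α (i.1.1 + i.2) ξ *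
            Eker β₁ (i.1.1 + i.1.2) η) * Complex.Gamma (β₂ + ↑(i.1.2 + i.2)) := by
    intro ξ hξ η hη
    calc (∫ ζ in Set.Ioi (0:ℝ),
        (Real.exp (-ξ - η - ζ) : ℂ) * (ξ : ℂ) ^ (α - 1) * (η : ℂ) ^ (β₁ - 1) *
          (ζ : ℂ) ^ (β₂ - 1) * hyp0F1 γ₁ (x * ξ * η) * hyp0F1 γ₂ (y * η * ζ) *
          hyp0F1 γ₃ (z * ξ * ζ))
        = ∫ ζ in Set.Ioi (0:ℝ), ∑' i : (ℕ × ℕ) × ℕ,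
            (cc₁ i.1.1 * cc₂ i.1.2 * cc₃ i.2 * Eker α (i.1.1 + i.2) ξ *
              Eker β₁ (i.1.1 + i.1.2) η) * Eker β₂ (i.1.2 + i.2) ζ :=
          setIntegral_congr_fun measurableSet_Ioi (fun ζ hζ => hexp ξ hξ η hη ζ hζ)
      _ = ∑' i : (ℕ × ℕ) × ℕ,
          (cc₁ i.1.1 * cc₂ i.1.2 * cc₃ i.2 * Eker α (i.1.1 + i.2) ξ *
            Eker β₁ (i.1.1 + i.1.2) η) * Complex.Gamma (β₂ + ↑(i.1.2 + i.2)) :=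
          exchange hβ₂ _ _ (Sζ ξ hξ η hη)
  -- the η-level exchange
  have hηswap : ∀ ξ : ℝ, 0 < ξ →
      (∫ η in Set.Ioi (0:ℝ), ∫ ζ in Set.Ioi (0:ℝ),
        (Real.exp (-ξ - η - ζ) : ℂ) * (ξ : ℂ) ^ (α - 1) * (η : ℂ) ^ (β₁ - 1) *
          (ζ : ℂ) ^ (β₂ - 1) * hyp0F1 γ₁ (x * ξ * η) * hyp0F1 γ₂ (y * η * ζ) *
          hyp0F1 γ₃ (z * ξ * ζ))
      = ∑' i : (ℕ × ℕ) × ℕ,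
          (cc₁ i.1.1 * cc₂ i.1.2 * cc₃ i.2 * Complex.Gamma (β₂ + ↑(i.1.2 + i.2)) *
            Complex.Gamma (β₁ + ↑(i.1.1 + i.1.2))) * Eker α (i.1.1 + i.2) ξ := by
    intro ξ hξ
    calc (∫ η in Set.Ioi (0:ℝ), ∫ ζ in Set.Ioi (0:ℝ),
        (Real.exp (-ξ - η - ζ) : ℂ) * (ξ : ℂ) ^ (α - 1) * (η : ℂ) ^ (β₁ - 1) *
          (ζ : ℂ) ^ (β₂ - 1) * hyp0F1 γ₁ (x * ξ * η) * hyp0F1 γ₂ (y * η * ζ) *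
          hyp0F1 γ₃ (z * ξ * ζ))
        = ∫ η in Set.Ioi (0:ℝ), ∑' i : (ℕ × ℕ) × ℕ,
            (cc₁ i.1.1 * cc₂ i.1.2 * cc₃ i.2 * Eker α (i.1.1 + i.2) ξ *
              Complex.Gamma (β₂ + ↑(i.1.2 + i.2))) * Eker β₁ (i.1.1 + i.1.2) η := by
          apply setIntegral_congr_fun measurableSet_Ioi
          intro η hη
          exact (hζswap ξ hξ η hη).trans (tsum_congr (fun i => by ring))
      _ = ∑' i : (ℕ × ℕ) × ℕ,
            (cc₁ i.1.1 * cc₂ i.1.2 * cc₃ i.2 * Eker α (i.1.1 + i.2) ξ *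
              Complex.Gamma (β₂ + ↑(i.1.2 + i.2))) * Complex.Gamma (β₁ + ↑(i.1.1 + i.1.2)) :=
          exchange hβ₁ _ _ (Sη ξ hξ)
      _ = ∑' i : (ℕ × ℕ) × ℕ,
          (cc₁ i.1.1 * cc₂ i.1.2 * cc₃ i.2 * Complex.Gamma (β₂ + ↑(i.1.2 + i.2)) *
            Complex.Gamma (β₁ + ↑(i.1.1 + i.1.2))) * Eker α (i.1.1 + i.2) ξ :=
          tsum_congr (fun i => by ring)
  -- the ξ-level exchange
  have hξswap :
      (∫ ξ in Set.Ioi (0:ℝ), ∫ η in Set.Ioi (0:ℝ), ∫ ζ in Set.Ioi (0:ℝ),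
        (Real.exp (-ξ - η - ζ) : ℂ) * (ξ : ℂ) ^ (α - 1) * (η : ℂ) ^ (β₁ - 1) *
          (ζ : ℂ) ^ (β₂ - 1) * hyp0F1 γ₁ (x * ξ * η) * hyp0F1 γ₂ (y * η * ζ) *
          hyp0F1 γ₃ (z * ξ * ζ))
      = ∑' i : (ℕ × ℕ) × ℕ,
          (cc₁ i.1.1 * cc₂ i.1.2 * cc₃ i.2 * Complex.Gamma (β₂ + ↑(i.1.2 + i.2)) *
            Complex.Gamma (β₁ + ↑(i.1.1 + i.1.2))) * Complex.Gamma (α + ↑(i.1.1 + i.2)) := by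
    calc (∫ ξ in Set.Ioi (0:ℝ), ∫ η in Set.Ioi (0:ℝ), ∫ ζ in Set.Ioi (0:ℝ),
        (Real.exp (-ξ - η - ζ) : ℂ) * (ξ : ℂ) ^ (α - 1) * (η : ℂ) ^ (β₁ - 1) *
          (ζ : ℂ) ^ (β₂ - 1) * hyp0F1 γ₁ (x * ξ * η) * hyp0F1 γ₂ (y * η * ζ) *
          hyp0F1 γ₃ (z * ξ * ζ))
        = ∫ ξ in Set.Ioi (0:ℝ), ∑' i : (ℕ × ℕ) × ℕ,
            (cc₁ i.1.1 * cc₂ i.1.2 * cc₃ i.2 * Complex.Gamma (β₂ + ↑(i.1.2 + i.2)) *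
              Complex.Gamma (β₁ + ↑(i.1.1 + i.1.2))) * Eker α (i.1.1 + i.2) ξ := by
          apply setIntegral_congr_fun measurableSet_Ioi
          intro ξ hξ
          exact hηswap ξ hξ
      _ = ∑' i : (ℕ × ℕ) × ℕ,
          (cc₁ i.1.1 * cc₂ i.1.2 * cc₃ i.2 * Complex.Gamma (β₂ + ↑(i.1.2 + i.2)) *
            Complex.Gamma (β₁ + ↑(i.1.1 + i.1.2))) * Complex.Gamma (α + ↑(i.1.1 + i.2)) :=
          exchange hα _ _ Sξ
  -- Gamma values are nonzero
  have hGα : Complex.Gamma α ≠ 0 := by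
    apply Complex.Gamma_ne_zero
    intro m h
    rw [h] at hα
    simp only [Complex.neg_re, Complex.natCast_re] at hα
    have : (0:ℝ) ≤ (m:ℝ) := Nat.cast_nonneg m
    linarith
  have hGβ₁ : Complex.Gamma β₁ ≠ 0 := by
    apply Complex.Gamma_ne_zero
    intro m h
    rw [h] at hβ₁
    simp only [Complex.neg_re, Complex.natCast_re] at hβ₁
    have : (0:ℝ) ≤ (m:ℝ) := Nat.cast_nonneg m
    linarith
  have hGβ₂ : Complex.Gamma β₂ ≠ 0 := by
    apply Complex.Gamma_ne_zero
    intro m h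
    rw [h] at hβ₂
    simp only [Complex.neg_re, Complex.natCast_re] at hβ₂
    have : (0:ℝ) ≤ (m:ℝ) := Nat.cast_nonneg m
    linarith
  -- per-term identity with H_B terms
  have hterm : ∀ i : (ℕ × ℕ) × ℕ,
      (cc₁ i.1.1 * cc₂ i.1.2 * cc₃ i.2 * Complex.Gamma (β₂ + ↑(i.1.2 + i.2)) *
        Complex.Gamma (β₁ + ↑(i.1.1 + i.1.2))) * Complex.Gamma (α + ↑(i.1.1 + i.2))
      = (poch α (i.1.1 + i.2) * poch β₁ (i.1.1 + i.1.2) * poch β₂ (i.1.2 + i.2) *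
          (x : ℂ) ^ i.1.1 * (y : ℂ) ^ i.1.2 * (z : ℂ) ^ i.2 /
          (poch γ₁ i.1.1 * poch γ₂ i.1.2 * poch γ₃ i.2 *
            (i.1.1.factorial : ℂ) * (i.1.2.factorial : ℂ) * (i.2.factorial : ℂ))) *
        (Complex.Gamma α * Complex.Gamma β₁ * Complex.Gamma β₂) := by
    intro i
    rw [Gamma_add_nat' hβ₂, Gamma_add_nat' hβ₁, Gamma_add_nat' hα,
      hcc₁def, hcc₂def, hcc₃def]
    simp only [div_eq_mul_inv, mul_inv]
    ring
  -- summability of the H_B terms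
  have hWsum : Summable (fun i : (ℕ × ℕ) × ℕ =>
      (cc₁ i.1.1 * cc₂ i.1.2 * cc₃ i.2 * Complex.Gamma (β₂ + ↑(i.1.2 + i.2)) *
        Complex.Gamma (β₁ + ↑(i.1.1 + i.1.2))) * Complex.Gamma (α + ↑(i.1.1 + i.2))) := by
    apply Summable.of_norm_bounded Sξ
    intro i
    rw [norm_mul]
    apply mul_le_mul_of_nonneg_left (hnG α hα (i.1.1 + i.2)) (norm_nonneg _)
  have hHBsum : Summable (fun i : (ℕ × ℕ) × ℕ =>
      poch α (i.1.1 + i.2) * poch β₁ (i.1.1 + i.1.2) * poch β₂ (i.1.2 + i.2) *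
        (x : ℂ) ^ i.1.1 * (y : ℂ) ^ i.1.2 * (z : ℂ) ^ i.2 /
        (poch γ₁ i.1.1 * poch γ₂ i.1.2 * poch γ₃ i.2 *
          (i.1.1.factorial : ℂ) * (i.1.2.factorial : ℂ) * (i.2.factorial : ℂ))) := by
    have hne : Complex.Gamma α * Complex.Gamma β₁ * Complex.Gamma β₂ ≠ 0 :=
      mul_ne_zero (mul_ne_zero hGα hGβ₁) hGβ₂
    have h := hWsum.mul_right (Complex.Gamma α * Complex.Gamma β₁ * Complex.Gamma β₂)⁻¹
    apply h.congr
    intro i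
    rw [hterm i]
    exact mul_inv_cancel_right₀ hne _
  -- final assembly
  rw [hξswap]
  rw [tsum_congr hterm, tsum_mul_right]
  rw [srivastavaHB, tsum3_nested hHBsum]
  have hne : Complex.Gamma α * Complex.Gamma β₁ * Complex.Gamma β₂ ≠ 0 :=
    mul_ne_zero (mul_ne_zero hGα hGβ₁) hGβ₂
  symm; rw [one_div, mul_comm, mul_inv_cancel_right₀ hne]
end
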